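/- In any transducer T, if q₁ ∼ q₂ (states q₁ and q₂ are strongly connected) defines an equivalence relation on states, and an edge is transient iff there is no run from its target back to its source, then in the split transducer split(T) = ⋃_{p ∈ P} T_p (union over paths p of the condensation DAG starting in an SCC containing an initial state, where T_p keeps only the transient edges occurring in p), the realised relation is preserved: ⟦split(T)⟧ = ⟦T⟧. -/

import Mathlib

variable {S G : Type}

def wordFG (w : List G) : FreeGroup G := (w.map FreeGroup.of).prod

def delta (v w : List G) : FreeGroup G := (wordFG v)⁻¹ * wordFG w

def dlen [DecidableEq G] (v w : List G) : ℕ := (delta v w).norm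

def wpow (v : List G) (n : ℕ) : List G := (List.replicate n v).flatten

structure NFT (S G Q : Type) where
  E : Set (Q × S × List G × Q)
  I : Set Q
  F : Set Q
  out : Q → List G

namespace NFT

variable {Q Q₁ Q₂ : Type}

inductive Run (T : NFT S G Q) : Q → List S → List G → Q → Prop
  | nil (q : Q) : Run T q [] [] q
  | cons {q q' q'' : Q} {a : S} {w : List G} {u : List S} {v : List G} :
      (q, a, w, q') ∈ T.E → Run T q' u v q'' → Run T q (a :: u) (w ++ v) q''

def Rel (T : NFT S G Q) (u : List S) (v : List G) : Prop :=
  ∃ i t w, i ∈ T.I ∧ t ∈ T.F ∧ T.Run i u w t ∧ v = w ++ T.out t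

def Trim (T : NFT S G Q) : Prop :=
  ∀ q : Q, ∃ i t u₁ w₁ u₂ w₂, i ∈ T.I ∧ t ∈ T.F ∧ T.Run i u₁ w₁ q ∧ T.Run q u₂ w₂ t

def WTP (T : NFT S G Q) : Prop :=
  ∀ q₁ q₂ (u v : List S) (u₁ u₂ v₁ v₂ : List G), T.Run q₁ u u₁ q₁ → T.Run q₁ v v₁ q₁ →
    T.Run q₁ u u₂ q₂ → T.Run q₂ v v₂ q₂ →
    delta u₁ u₂ = delta (u₁ ++ v₁) (u₂ ++ v₂)

def Seq (T : NFT S G Q) : Prop :=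
  (∃ q₀, T.I = {q₀}) ∧
  ∀ q a w₁ q₁ w₂ q₂, (q, a, w₁, q₁) ∈ T.E → (q, a, w₂, q₂) ∈ T.E → w₁ = w₂ ∧ q₁ = q₂

end NFT

def NFT.Reach {Q : Type} (T : NFT S G Q) (q q' : Q) : Prop := ∃ u w, T.Run q u w q'

def NFT.SC {Q : Type} (T : NFT S G Q) (q q' : Q) : Prop := T.Reach q q' ∧ T.Reach q' q

def NFT.TransientE {Q : Type} (T : NFT S G Q) (e : Q × S × List G × Q) : Prop :=
  e ∈ T.E ∧ ¬ T.Reach e.2.2.2 e.1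

/-- A path of the condensation DAG starting in an SCC containing an initial state: a sequence of
transient edges, consecutive ones linked by strongly connected states, whose first edge starts in
the SCC of an initial state. -/
def NFT.CondPath {Q : Type} (T : NFT S G Q) (l : List (Q × S × List G × Q)) : Prop :=
  (∀ e ∈ l, T.TransientE e) ∧
  l.Chain' (fun e e' => T.SC e.2.2.2 e'.1) ∧
  (∀ e, l.head? = some e → ∃ i ∈ T.I, T.SC i e.1)

/-- The subtransducer `T_p` keeping all non-transient edges and the transient edges of `p`. -/
def NFT.restrictPath {Q : Type} (T : NFT S G Q) (l : List (Q × S × List G × Q)) : NFT S G Q :=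
  { E := {e ∈ T.E | ¬ T.TransientE e ∨ e ∈ l}, I := T.I, F := T.F, out := T.out }

section Aux

variable {Q : Type} {T : NFT S G Q}

theorem NFT.Run.append_aux {q q' q'' : Q} {u u' : List S} {w w' : List G}
    (h : T.Run q u w q') (h' : T.Run q' u' w' q'') :
    T.Run q (u ++ u') (w ++ w') q'' := by
  induction h with
  | nil => simpa using h'
  | cons he _ ih => simpa [List.append_assoc] using NFT.Run.cons he (ih h')

theorem NFT.Reach.refl_aux (q : Q) : T.Reach q q := ⟨[], [], NFT.Run.nil q⟩

theorem NFT.Reach.trans_aux {q q' q'' : Q} (h : T.Reach q q') (h' : T.Reach q' q'') :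
    T.Reach q q'' := by
  obtain ⟨u, w, hr⟩ := h
  obtain ⟨u', w', hr'⟩ := h'
  exact ⟨u ++ u', w ++ w', hr.append_aux hr'⟩

theorem NFT.SC.refl_aux (q : Q) : T.SC q q := ⟨NFT.Reach.refl_aux q, NFT.Reach.refl_aux q⟩

theorem NFT.SC.trans_aux {q q' q'' : Q} (h : T.SC q q') (h' : T.SC q' q'') : T.SC q q'' :=
  ⟨h.1.trans_aux h'.1, h'.2.trans_aux h.2⟩

theorem NFT.Run.mono_aux {T₁ T₂ : NFT S G Q} (hE : T₁.E ⊆ T₂.E) {q q' : Q}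
    {u : List S} {w : List G} (h : T₁.Run q u w q') : T₂.Run q u w q' := by
  induction h with
  | nil q => exact NFT.Run.nil q
  | cons he _ ih => exact NFT.Run.cons (hE he) ih

theorem NFT.restrictPath_subset (l : List (Q × S × List G × Q)) :
    (T.restrictPath l).E ⊆ T.E := fun _ he => he.1

theorem NFT.restrictPath_mono {l l' : List (Q × S × List G × Q)} (h : l ⊆ l') :
    (T.restrictPath l).E ⊆ (T.restrictPath l').E :=
  fun _ he => ⟨he.1, he.2.imp id (fun hm => h hm)⟩

theorem NFT.run_extract {q q' : Q} {u : List S} {w : List G} (h : T.Run q u w q') :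
    ∃ l, (∀ e ∈ l, T.TransientE e) ∧ l.Chain' (fun e e' => T.SC e.2.2.2 e'.1) ∧
      (∀ e, l.head? = some e → T.SC q e.1) ∧ (T.restrictPath l).Run q u w q' := by
  induction h with
  | nil q => exact ⟨[], by simp, List.isChain_nil, by simp, NFT.Run.nil q⟩
  | cons he hrun ih =>
    rename_i q q' q'' a w u v
    obtain ⟨l, hl1, hl2, hl3, hl4⟩ := ih
    by_cases ht : T.TransientE (q, a, w, q')
    · refine ⟨(q, a, w, q') :: l, ?_, ?_, ?_, ?_⟩
      · intro e hel
        rcases List.mem_cons.1 hel with h | h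
        · exact h ▸ ht
        · exact hl1 e h
      · rw [List.Chain', List.isChain_cons]
        refine ⟨?_, hl2⟩
        intro b hb
        exact hl3 b hb
      · intro e hel
        simp only [List.head?_cons, Option.some.injEq] at hel
        exact hel ▸ NFT.SC.refl_aux q
      · refine NFT.Run.cons ⟨he, Or.inr (List.mem_cons_self)⟩ ?_
        exact hl4.mono_aux (NFT.restrictPath_mono (List.subset_cons_self _ _))
    · have hback : T.Reach q' q := by
        by_contra hno
        exact ht ⟨he, hno⟩
      have hsc : T.SC q q' := ⟨⟨[a], w ++ [], NFT.Run.cons he (NFT.Run.nil q')⟩, hback⟩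
      refine ⟨l, hl1, hl2, ?_, NFT.Run.cons ⟨he, Or.inl ht⟩ hl4⟩
      intro e hel
      exact hsc.trans_aux (hl3 e hel)

end Aux

/-- The split of `T` (union of the `T_p` over condensation paths `p` from an initial SCC)
realises the same relation as `T`. -/
theorem split_equiv {Q : Type} (T : NFT S G Q) :
    ∀ u v, T.Rel u v ↔ ∃ l, T.CondPath l ∧ (T.restrictPath l).Rel u v := by
  intro u v
  constructor
  · rintro ⟨i, t, w, hi, ht, hrun, hv⟩
    obtain ⟨l, hl1, hl2, hl3, hl4⟩ := NFT.run_extract hrun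
    refine ⟨l, ⟨hl1, hl2, fun e hel => ⟨i, hi, hl3 e hel⟩⟩, i, t, w, hi, ht, hl4, hv⟩
  · rintro ⟨l, _, i, t, w, hi, ht, hrun, hv⟩
    exact ⟨i, t, w, hi, ht, hrun.mono_aux (NFT.restrictPath_subset l), hv⟩
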